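/- With Ĥ = ⨁_{n≥1} H, Ĵ = J ⊕ (−I) ⊕ ⋯, canonical projection p and embedding j(x) = x ⊕ 0 ⊕ 0 ⊕ ⋯: if L is a maximal positive subspace of (Ĥ, Ĵ) with angular operator K : Ĥ₊ → Ĥ₋, then pL is a maximal positive subspace of (H, J) with angular operator pKj, and ‖pKj‖ ≤ ‖K‖ ≤ 1. -/

import Mathlib

open scoped ENNReal

variable {H : Type*} [NormedAddCommGroup H] [InnerProductSpace ℂ H] [CompleteSpace H]

/-- The positive component `Ĥ₊ = Hp ⊕ 0 ⊕ 0 ⊕ ⋯` of the direct-sum Krein space. -/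
noncomputable def Hhatp (Hp : Submodule ℂ H) : Submodule ℂ (lp (fun _ : ℕ => H) 2) where
  carrier := {f | f 0 ∈ Hp ∧ ∀ n : ℕ, n ≠ 0 → f n = 0}
  add_mem' := by
    intro f g hf hg
    refine ⟨?_, fun n hn => ?_⟩
    · simpa [lp.coeFn_add, Pi.add_apply] using Hp.add_mem hf.1 hg.1
    · simp [lp.coeFn_add, Pi.add_apply, hf.2 n hn, hg.2 n hn]
  zero_mem' := by
    refine ⟨?_, fun n hn => ?_⟩ <;> simp [lp.coeFn_zero]
  smul_mem' := by
    intro c f hf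
    refine ⟨?_, fun n hn => ?_⟩
    · simpa [lp.coeFn_smul, Pi.smul_apply] using Hp.smul_mem c hf.1
    · simp [lp.coeFn_smul, Pi.smul_apply, hf.2 n hn]

/-- The negative component `Ĥ₋ = Hpᗮ ⊕ H ⊕ H ⊕ ⋯` of the direct-sum Krein space. -/
noncomputable def Hhatm (Hp : Submodule ℂ H) : Submodule ℂ (lp (fun _ : ℕ => H) 2) where
  carrier := {f | f 0 ∈ Hpᗮ}
  add_mem' := by
    intro f g hf hg
    simpa [lp.coeFn_add, Pi.add_apply] using Hpᗮ.add_mem hf hg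
  zero_mem' := by simp [lp.coeFn_zero, Set.mem_setOf_eq]
  smul_mem' := by
    intro c f hf
    simpa [lp.coeFn_smul, Pi.smul_apply] using Hpᗮ.smul_mem c hf

set_option maxHeartbeats 2000000 in
/-- if `L` is a maximal positive subspace of `(Ĥ, Ĵ)` with angular operator
`K : Ĥ₊ → Ĥ₋`, then `pL` is a maximal positive subspace of `(H, J)` with angular
operator `pKj`, and `‖pKj‖ ≤ ‖K‖ ≤ 1`. -/
theorem image_of_maximal_positive_subspace (Hp : Submodule ℂ H) [CompleteSpace Hp]
    (J : H →L[ℂ] H) (hJp : ∀ x ∈ Hp, J x = x) (hJm : ∀ x ∈ Hpᗮ, J x = -x)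
    (Jhat : lp (fun _ : ℕ => H) 2 →L[ℂ] lp (fun _ : ℕ => H) 2)
    (hJhat0 : ∀ f : lp (fun _ : ℕ => H) 2, (Jhat f) 0 = J (f 0))
    (hJhatn : ∀ (f : lp (fun _ : ℕ => H) 2) (n : ℕ), n ≠ 0 → (Jhat f) n = -(f n))
    (p : lp (fun _ : ℕ => H) 2 →L[ℂ] H)
    (hp : ∀ f : lp (fun _ : ℕ => H) 2, p f = f 0)
    (j : H →L[ℂ] lp (fun _ : ℕ => H) 2)
    (hj0 : ∀ x : H, (j x) 0 = x) (hjn : ∀ (x : H) (n : ℕ), n ≠ 0 → (j x) n = 0)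
    (K : Hhatp Hp →L[ℂ] Hhatm Hp) (hK : ‖K‖ ≤ 1)
    (L : Submodule ℂ (lp (fun _ : ℕ => H) 2))
    (hLgraph : (L : Set (lp (fun _ : ℕ => H) 2)) =
      {x | ∃ xp : Hhatp Hp, x = (xp : lp (fun _ : ℕ => H) 2) + (K xp : lp (fun _ : ℕ => H) 2)})
    (hLpos : ∀ x ∈ L, 0 ≤ (inner ℂ x (Jhat x) : ℂ).re)
    (hLmax : ∀ M : Submodule ℂ (lp (fun _ : ℕ => H) 2),
      (∀ x ∈ M, 0 ≤ (inner ℂ x (Jhat x) : ℂ).re) → L ≤ M → M = L) :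
    ∃ K' : Hp →L[ℂ] Hpᗮ,
      (∀ (xp : Hp) (y : Hhatp Hp), (y : lp (fun _ : ℕ => H) 2) = j xp →
        (K' xp : H) = p (K y : lp (fun _ : ℕ => H) 2)) ∧
      ‖K'‖ ≤ ‖K‖ ∧ ‖K‖ ≤ 1 ∧
      ((L.map (p : lp (fun _ : ℕ => H) 2 →ₗ[ℂ] H) : Set H) = {x | ∃ xp : Hp, x = (xp : H) + (K' xp : H)}) ∧
      (∀ y ∈ L.map (p : lp (fun _ : ℕ => H) 2 →ₗ[ℂ] H), 0 ≤ (inner ℂ y (J y) : ℂ).re) ∧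
      (∀ M : Submodule ℂ H, (∀ y ∈ M, 0 ≤ (inner ℂ y (J y) : ℂ).re) →
        L.map (p : lp (fun _ : ℕ => H) 2 →ₗ[ℂ] H) ≤ M → M = L.map (p : lp (fun _ : ℕ => H) 2 →ₗ[ℂ] H)) := by

  classical
  -- the embedding into the positive component
  have hjmem : ∀ x : Hp, j (x : H) ∈ Hhatp Hp := fun x =>
    ⟨by rw [hj0]; exact x.2, fun n hn => hjn x n hn⟩
  set jhat : Hp →L[ℂ] Hhatp Hp :=
    ContinuousLinearMap.codRestrict (j.comp Hp.subtypeL) (Hhatp Hp) hjmem with hjhat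
  have hpmem : ∀ f : Hhatm Hp, p (f : lp (fun _ : ℕ => H) 2) ∈ Hpᗮ := fun f => by
    rw [hp]; exact f.2
  set phat : Hhatm Hp →L[ℂ] ↥Hpᗮ :=
    ContinuousLinearMap.codRestrict (p.comp (Hhatm Hp).subtypeL) Hpᗮ hpmem with hphat
  have hjnorm : ∀ x : H, ‖j x‖ = ‖x‖ := by
      intro x
      have hsingle : j x = lp.single 2 (0 : ℕ) x := by
        apply lp.ext
        funext n
        rcases eq_or_ne n 0 with rfl | hn
        · rw [hj0, lp.single_apply_self]
        · rw [hjn x n hn, lp.single_apply_ne _ _ _ hn]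
      rw [hsingle]
      exact lp.norm_single (E := fun _ : ℕ => H) (p := 2) (by norm_num) 0 x
  have hKnorm : ∀ x : Hp, ‖(phat.comp (K.comp jhat)) x‖ ≤ ‖K‖ * ‖x‖ := by
      intro x
      have h1 : ‖(phat.comp (K.comp jhat)) x‖ = ‖p ((K (jhat x) : lp (fun _ : ℕ => H) 2))‖ := rfl
      rw [h1, hp]
      calc ‖(K (jhat x) : lp (fun _ : ℕ => H) 2) 0‖
          ≤ ‖(K (jhat x) : lp (fun _ : ℕ => H) 2)‖ :=
            lp.norm_apply_le_norm (by norm_num) _ 0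
        _ = ‖K (jhat x)‖ := rfl
        _ ≤ ‖K‖ * ‖jhat x‖ := K.le_opNorm _
        _ = ‖K‖ * ‖x‖ := by
            congr 1
            show ‖j (x : H)‖ = ‖x‖
            exact hjnorm (x : H)
  have hgraph : ((L.map (p : lp (fun _ : ℕ => H) 2 →ₗ[ℂ] H) : Submodule ℂ H) : Set H) =
        {x | ∃ xp : Hp, x = (xp : H) + ((phat.comp (K.comp jhat)) xp : H)} := by
      ext y
      simp only [Submodule.map_coe, Set.mem_image, SetLike.mem_coe, Set.mem_setOf_eq]
      constructor
      · rintro ⟨f, hf, rfl⟩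
        rw [← SetLike.mem_coe, hLgraph] at hf
        obtain ⟨xp, rfl⟩ := hf
        refine ⟨⟨(xp : lp (fun _ : ℕ => H) 2) 0, xp.2.1⟩, ?_⟩
        have hxp : jhat ⟨(xp : lp (fun _ : ℕ => H) 2) 0, xp.2.1⟩ = xp := by
          apply Subtype.ext
          apply lp.ext
          funext n
          rcases eq_or_ne n 0 with rfl | hn
          · show (j _) 0 = _
            rw [hj0]
            rfl
          · show (j _) n = _
            rw [hjn _ n hn, xp.2.2 n hn]
        rw [ContinuousLinearMap.coe_coe, hp]
        show ((xp : lp (fun _ : ℕ => H) 2) + (K xp : lp (fun _ : ℕ => H) 2)) 0 = _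
        rw [lp.coeFn_add, Pi.add_apply]
        congr 1
        show _ = p ((K (jhat _) : lp (fun _ : ℕ => H) 2))
        rw [hxp, hp]
      · rintro ⟨xp, rfl⟩
        refine ⟨(jhat xp : lp (fun _ : ℕ => H) 2) + (K (jhat xp) : lp (fun _ : ℕ => H) 2), ?_, ?_⟩
        · rw [← SetLike.mem_coe, hLgraph]
          exact ⟨jhat xp, rfl⟩
        · rw [ContinuousLinearMap.coe_coe, hp, lp.coeFn_add, Pi.add_apply]
          congr 1
          · show (j (xp : H)) 0 = _
            rw [hj0]
          · show _ = p ((K (jhat xp) : lp (fun _ : ℕ => H) 2))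
            rw [hp]
  have hpos : ∀ y ∈ L.map (p : lp (fun _ : ℕ => H) 2 →ₗ[ℂ] H), 0 ≤ (inner ℂ y (J y) : ℂ).re := by
      intro y hy
      rw [← SetLike.mem_coe, hgraph] at hy
      obtain ⟨xp, rfl⟩ := hy
      set k : ↥Hpᗮ := (phat.comp (K.comp jhat)) xp with hk
      have hJy : J ((xp : H) + (k : H)) = (xp : H) - (k : H) := by
        rw [map_add, hJp _ xp.2, hJm _ k.2, sub_eq_add_neg]
      rw [hJy]
      have horth : (inner ℂ (xp : H) (k : H) : ℂ) = 0 :=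
        (Submodule.mem_orthogonal Hp (k : H)).mp k.2 _ xp.2
      have horth' : (inner ℂ (k : H) (xp : H) : ℂ) = 0 := by
        rw [← inner_conj_symm, horth, map_zero]
      have hexp : (inner ℂ ((xp : H) + (k : H)) ((xp : H) - (k : H)) : ℂ).re =
          ‖(xp : H)‖^2 - ‖(k : H)‖^2 := by
        rw [inner_add_left, inner_sub_right, inner_sub_right,
          inner_self_eq_norm_sq_to_K, inner_self_eq_norm_sq_to_K, horth, horth']
        rw [← RCLike.re_to_complex, sub_zero, zero_sub, ← RCLike.ofReal_pow,
          ← RCLike.ofReal_pow, ← RCLike.ofReal_neg, ← RCLike.ofReal_add, RCLike.ofReal_re]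
        ring
      rw [hexp]
      have hnk : ‖(k : H)‖ ≤ ‖(xp : H)‖ := by
        have h1 : ‖(k : H)‖ = ‖k‖ := rfl
        have h2 : ‖(xp : H)‖ = ‖xp‖ := rfl
        rw [h1, h2]
        calc ‖k‖ ≤ ‖K‖ * ‖xp‖ := hKnorm xp
          _ ≤ 1 * ‖xp‖ := mul_le_mul_of_nonneg_right hK (norm_nonneg _)
          _ = ‖xp‖ := one_mul _
      have : (0:ℝ) ≤ ‖(xp : H)‖^2 - ‖(k : H)‖^2 := by
        nlinarith [norm_nonneg (k : H), norm_nonneg (xp : H)]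
      linarith
  refine ⟨phat.comp (K.comp jhat), ?_, ?_, ?_, ?_, ?_, ?_⟩
  case _ =>
    intro xp y hy
    have : y = jhat xp := Subtype.ext (by rw [hy]; rfl)
    simp [this, hphat]
    rfl
  case _ => exact (phat.comp (K.comp jhat)).opNorm_le_bound (norm_nonneg K) hKnorm
  case _ => exact hK
  case _ => exact hgraph
  case _ => exact hpos
  case _ =>
    intro M hM hLM
    refine le_antisymm ?_ hLM
    intro m hm
    set mp : Hp := Hp.orthogonalProjectionOnto m with hmp
    have hgm : (mp : H) + ((phat.comp (K.comp jhat)) mp : H) ∈ L.map (p : lp (fun _ : ℕ => H) 2 →ₗ[ℂ] H) := by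
      rw [← SetLike.mem_coe, hgraph]
      exact ⟨mp, rfl⟩
    set v : H := m - ((mp : H) + ((phat.comp (K.comp jhat)) mp : H)) with hv
    clear_value mp v
    have hvM : v ∈ M := by rw [hv]; exact M.sub_mem hm (hLM hgm)
    have hvorth : v ∈ Hpᗮ := by
      have h1 : m - (mp : H) ∈ Hpᗮ := by
        rw [hmp, ← Submodule.starProjection_apply]; exact Submodule.sub_starProjection_mem_orthogonal (K := Hp) m
      have : v = (m - (mp : H)) - ((phat.comp (K.comp jhat)) mp : H) := by
        rw [hv]; abel
      rw [this]
      exact Hpᗮ.sub_mem h1 ((phat.comp (K.comp jhat)) mp).2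
    have hv0 : v = 0 := by
      have hpv := hM v hvM
      rw [hJm v hvorth, inner_neg_right] at hpv
      have : (inner ℂ v v : ℂ).re = ‖v‖^2 := by
        rw [← RCLike.re_to_complex]
        exact inner_self_eq_norm_sq v
      rw [Complex.neg_re, this] at hpv
      have : ‖v‖^2 ≤ 0 := by linarith
      have : ‖v‖ = 0 := by nlinarith [norm_nonneg v]
      exact norm_eq_zero.mp this
    have hm' : m = (mp : H) + ((phat.comp (K.comp jhat)) mp : H) := by
      have h := hv0
      rw [hv, sub_eq_zero] at h
      exact h
    rw [hm']
    exact hgm
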